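/- arXiv:1705.11182 — 5 statements merged into one kernel-verified Lean document; each statement's English description precedes it below -/
import Mathlib

section
/- Let ℓ ≥ 0, α ∈ (0,1), and suppose f : (0,∞) × D × D → [0,∞) satisfies f(t,x,y) ≤ M t^{-ℓ/2} exp(-|x-y|²/(Mt)) for all t > 0 and x,y ∈ D ⊆ ℝ^d. Then there is a constant c₁ = c₁(M,ℓ,α) > 0 such that ∫_0^∞ f(t^{1/α} s, x, y) g(α,s) ds ≤ c₁ · min( t^{-ℓ/(2α)}, t / |x-y|^{ℓ+2α} ) for all t > 0 and x,y ∈ D. -/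
open MeasureTheory Real Set


lemma exp_neg_le (n : ℕ) {z : ℝ} (hz : 0 < z) :
    Real.exp (-z) ≤ (Nat.factorial n : ℝ) * z ^ (-(n:ℝ)) := by
  have h1 : z ^ n / (Nat.factorial n : ℝ) ≤ Real.exp z :=
    Real.pow_div_factorial_le_exp (x := z) hz.le n
  have hn : (0:ℝ) < (Nat.factorial n : ℝ) := by positivity
  have hzn : (0:ℝ) < z ^ n := by positivity
  rw [Real.exp_neg, Real.rpow_neg hz.le, Real.rpow_natCast]
  calc (Real.exp z)⁻¹ ≤ (z ^ n / (Nat.factorial n : ℝ))⁻¹ := by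
        apply inv_anti₀ (by positivity) h1
    _ = (Nat.factorial n : ℝ) * (z ^ n)⁻¹ := by field_simp

lemma key_integral {a c : ℝ} (ha : 1 < a) (hc : 0 < c) (n : ℕ) (hn : a - 1 < n) :
    IntegrableOn (fun s : ℝ => s ^ (-a) * Real.exp (-(c / s))) (Ioi 0) ∧
    (∫ s in Ioi (0:ℝ), s ^ (-a) * Real.exp (-(c / s))) ≤
      ((Nat.factorial n : ℝ) / ((n:ℝ) - a + 1) + 1 / (a - 1)) * c ^ (1 - a) := by
  set φ : ℝ → ℝ := fun s => s ^ (-a) * Real.exp (-(c / s)) with hφ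
  have hmeas : Measurable φ := by
    apply Measurable.mul
    · measurability
    · exact (measurable_const.div measurable_id).neg.exp
  set r : ℝ := (n:ℝ) - a with hr_def
  have hr : -1 < r := by rw [hr_def]; linarith
  have hr1 : 0 < r + 1 := by linarith
  -- pointwise bound on Ioc 0 c
  have hφ1 : ∀ s ∈ Ioc (0:ℝ) c, φ s ≤ (Nat.factorial n : ℝ) * c ^ (-(n:ℝ)) * s ^ r := by
    intro s hs
    have hs0 : 0 < s := hs.1
    have h1 : Real.exp (-(c / s)) ≤ (Nat.factorial n : ℝ) * (c / s) ^ (-(n:ℝ)) :=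
      exp_neg_le n (div_pos hc hs0)
    have h2 : (c / s) ^ (-(n:ℝ)) = c ^ (-(n:ℝ)) * s ^ (n:ℝ) := by
      rw [Real.rpow_neg (by positivity), Real.div_rpow hc.le hs0.le, inv_div,
        Real.rpow_neg hc.le, div_eq_mul_inv, mul_comm]
    calc φ s ≤ s ^ (-a) * ((Nat.factorial n : ℝ) * (c / s) ^ (-(n:ℝ))) :=
          mul_le_mul_of_nonneg_left h1 (Real.rpow_nonneg hs0.le _)
      _ = (Nat.factorial n : ℝ) * c ^ (-(n:ℝ)) * s ^ r := by
          rw [h2, hr_def, Real.rpow_sub hs0, Real.rpow_neg hs0.le, div_eq_mul_inv]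
          ring
  -- majorant on Ioc 0 c
  have Int1 : IntegrableOn (fun s : ℝ => (Nat.factorial n : ℝ) * c ^ (-(n:ℝ)) * s ^ r) (Ioc 0 c) := by
    have h := intervalIntegral.intervalIntegrable_rpow' (a := 0) (b := c) hr
    rw [intervalIntegrable_iff, uIoc_of_le hc.le] at h
    exact h.const_mul _
  have hφnn : ∀ s ∈ Ioi (0:ℝ), 0 ≤ φ s := fun s hs =>
    mul_nonneg (Real.rpow_nonneg (le_of_lt hs) _) (Real.exp_pos _).le
  have Iφ1 : IntegrableOn φ (Ioc 0 c) := by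
    apply Int1.mono' hmeas.aestronglyMeasurable
    filter_upwards [ae_restrict_mem measurableSet_Ioc] with s hs
    rw [Real.norm_eq_abs, abs_of_nonneg (hφnn s hs.1)]
    exact hφ1 s hs
  -- majorant on Ioi c
  have Int2 : IntegrableOn (fun s : ℝ => s ^ (-a)) (Ioi c) :=
    integrableOn_Ioi_rpow_of_lt (by linarith) hc
  have hφ2 : ∀ s ∈ Ioi c, φ s ≤ s ^ (-a) := by
    intro s hs
    have hs0 : 0 < s := hc.trans hs
    calc φ s ≤ s ^ (-a) * 1 :=
          mul_le_mul_of_nonneg_left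
            (Real.exp_le_one_iff.mpr (neg_nonpos.mpr (div_pos hc hs0).le))
            (Real.rpow_nonneg hs0.le _)
      _ = s ^ (-a) := mul_one _
  have Iφ2 : IntegrableOn φ (Ioi c) := by
    apply Int2.mono' hmeas.aestronglyMeasurable
    filter_upwards [ae_restrict_mem measurableSet_Ioi] with s hs
    rw [Real.norm_eq_abs, abs_of_nonneg (hφnn s (lt_trans hc hs))]
    exact hφ2 s hs
  have hunion : Ioc (0:ℝ) c ∪ Ioi c = Ioi 0 := Ioc_union_Ioi_eq_Ioi hc.le
  have Iφ : IntegrableOn φ (Ioi 0) := by rw [← hunion]; exact Iφ1.union Iφ2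
  refine ⟨Iφ, ?_⟩
  have hsplit : (∫ s in Ioi (0:ℝ), φ s) = (∫ s in Ioc (0:ℝ) c, φ s) + ∫ s in Ioi c, φ s := by
    rw [← hunion]
    exact setIntegral_union (Ioc_disjoint_Ioi le_rfl) measurableSet_Ioi Iφ1 Iφ2
  -- bound first piece
  have hb1 : (∫ s in Ioc (0:ℝ) c, φ s) ≤ (Nat.factorial n : ℝ) / (r + 1) * c ^ (1 - a) := by
    have h1 : (∫ s in Ioc (0:ℝ) c, φ s)
        ≤ ∫ s in Ioc (0:ℝ) c, (Nat.factorial n : ℝ) * c ^ (-(n:ℝ)) * s ^ r :=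
      setIntegral_mono_on Iφ1 Int1 measurableSet_Ioc hφ1
    have h2 : (∫ s in Ioc (0:ℝ) c, (Nat.factorial n : ℝ) * c ^ (-(n:ℝ)) * s ^ r)
        = (Nat.factorial n : ℝ) * c ^ (-(n:ℝ)) * (c ^ (r + 1) / (r + 1)) := by
      rw [integral_const_mul]
      congr 1
      rw [← intervalIntegral.integral_of_le hc.le, integral_rpow (Or.inl hr),
        Real.zero_rpow (by linarith : r + 1 ≠ 0)]
      ring
    have h3 : c ^ (-(n:ℝ)) * c ^ (r + 1) = c ^ (1 - a) := by
      rw [← Real.rpow_add hc]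
      congr 1
      rw [hr_def]; ring
    calc (∫ s in Ioc (0:ℝ) c, φ s)
        ≤ (Nat.factorial n : ℝ) * c ^ (-(n:ℝ)) * (c ^ (r + 1) / (r + 1)) := h1.trans h2.le
      _ = (Nat.factorial n : ℝ) / (r + 1) * (c ^ (-(n:ℝ)) * c ^ (r + 1)) := by ring
      _ = (Nat.factorial n : ℝ) / (r + 1) * c ^ (1 - a) := by rw [h3]
  -- bound second piece
  have hb2 : (∫ s in Ioi c, φ s) ≤ 1 / (a - 1) * c ^ (1 - a) := by
    have h1 : (∫ s in Ioi c, φ s) ≤ ∫ s in Ioi c, s ^ (-a) :=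
      setIntegral_mono_on Iφ2 Int2 measurableSet_Ioi hφ2
    have h2 : (∫ s in Ioi c, s ^ (-a)) = -c ^ (-a + 1) / (-a + 1) :=
      integral_Ioi_rpow_of_lt (by linarith) hc
    have h3 : -c ^ (-a + 1) / (-a + 1) = 1 / (a - 1) * c ^ (1 - a) := by
      rw [show -a + 1 = 1 - a by ring]
      have h4 : (1:ℝ) - a ≠ 0 := by linarith
      have h5 : a - 1 ≠ 0 := by linarith
      field_simp
      ring
    calc (∫ s in Ioi c, φ s) ≤ -c ^ (-a + 1) / (-a + 1) := h1.trans h2.le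
      _ = 1 / (a - 1) * c ^ (1 - a) := h3
  rw [hsplit, hr_def] at *
  calc (∫ s in Ioc (0:ℝ) c, φ s) + ∫ s in Ioi c, φ s
      ≤ (Nat.factorial n : ℝ) / ((n:ℝ) - a + 1) * c ^ (1 - a) + 1 / (a - 1) * c ^ (1 - a) := by
        exact add_le_add hb1 hb2
    _ = ((Nat.factorial n : ℝ) / ((n:ℝ) - a + 1) + 1 / (a - 1)) * c ^ (1 - a) := by ring


/-- Subordinated Gaussian bound: if `0 ≤ f(t,x,y) ≤ M t^{-ℓ/2} e^{-|x-y|²/(Mt)}` on a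
domain `D ⊆ ℝ^d`, then `∫_0^∞ f(t^{1/α}s,x,y) g(α,s) ds ≤ c₁ min(t^{-ℓ/(2α)}, t/|x-y|^{ℓ+2α})`. -/
theorem subordinated_gaussian_bound {d : ℕ} (D : Set (EuclideanSpace ℝ (Fin d)))
    (α ℓ M chat : ℝ) (hα : α ∈ Ioo (0 : ℝ) 1) (hℓ : 0 ≤ ℓ) (hM : 0 < M) (hchat : 0 < chat)
    (g : ℝ → ℝ) (hgm : Measurable g) (hgnn : ∀ s : ℝ, 0 < s → 0 ≤ g s)
    (hgi : IntegrableOn g (Ioi 0)) (hgint : (∫ s in Ioi (0 : ℝ), g s) = 1)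
    (hgb : ∀ s : ℝ, 0 < s → g s ≤ chat * s ^ (-1 - α))
    (hgl : IntegrableOn (fun s : ℝ => s ^ (-(ℓ / 2)) * g s) (Ioc 0 1))
    (f : ℝ → EuclideanSpace ℝ (Fin d) → EuclideanSpace ℝ (Fin d) → ℝ)
    (hf0 : ∀ t : ℝ, 0 < t → ∀ x ∈ D, ∀ y ∈ D, 0 ≤ f t x y)
    (hfb : ∀ t : ℝ, 0 < t → ∀ x ∈ D, ∀ y ∈ D,
      f t x y ≤ M * t ^ (-(ℓ / 2)) * Real.exp (-(dist x y) ^ 2 / (M * t))) :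
    ∃ c₁ : ℝ, 0 < c₁ ∧ ∀ t : ℝ, 0 < t → ∀ x ∈ D, ∀ y ∈ D,
      (∫ s in Ioi (0 : ℝ), f (t ^ (1 / α) * s) x y * g s) ≤ c₁ * t ^ (-(ℓ / (2 * α))) ∧
      (x ≠ y →
        (∫ s in Ioi (0 : ℝ), f (t ^ (1 / α) * s) x y * g s)
          ≤ c₁ * t / dist x y ^ (ℓ + 2 * α)) := by
  obtain ⟨hα0, hα1⟩ := hα
  set n : ℕ := ⌈ℓ / 2⌉₊ + 1 with hn_def
  set a : ℝ := ℓ / 2 + 1 + α with ha_def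
  have ha : 1 < a := by rw [ha_def]; linarith
  have hceil : ℓ / 2 ≤ (⌈ℓ / 2⌉₊ : ℝ) := Nat.le_ceil _
  have hn : a - 1 < (n : ℝ) := by
    rw [ha_def, hn_def]; push_cast; linarith
  set K : ℝ := (Nat.factorial n : ℝ) / ((n:ℝ) - a + 1) + 1 / (a - 1) with hK_def
  have hK : 0 < K := by
    apply add_pos
    · exact div_pos (by positivity) (by linarith)
    · exact one_div_pos.mpr (by linarith)
  -- integrability of the moment function on Ioi 0
  have hmom_meas : Measurable (fun s : ℝ => s ^ (-(ℓ / 2)) * g s) := by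
    apply Measurable.mul _ hgm
    measurability
  have hmomI : IntegrableOn (fun s : ℝ => s ^ (-(ℓ / 2)) * g s) (Ioi 0) := by
    rw [← Ioc_union_Ioi_eq_Ioi (zero_le_one (α := ℝ))]
    refine hgl.union ?_
    apply Integrable.mono' (hgi.mono_set (Ioi_subset_Ioi zero_le_one))
      hmom_meas.aestronglyMeasurable
    filter_upwards [ae_restrict_mem measurableSet_Ioi] with s hs
    have hs1 : (1:ℝ) ≤ s := le_of_lt hs
    have hs0 : 0 < s := lt_of_lt_of_le one_pos hs1
    rw [Real.norm_eq_abs, abs_of_nonneg (mul_nonneg (Real.rpow_nonneg hs0.le _) (hgnn s hs0))]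
    calc s ^ (-(ℓ / 2)) * g s ≤ 1 * g s := by
          apply mul_le_mul_of_nonneg_right _ (hgnn s hs0)
          exact Real.rpow_le_one_of_one_le_of_nonpos hs1 (by linarith)
      _ = g s := one_mul _
  set C₀ : ℝ := ∫ s in Ioi (0:ℝ), s ^ (-(ℓ / 2)) * g s with hC0_def
  have hC0 : 0 ≤ C₀ := setIntegral_nonneg measurableSet_Ioi
    (fun s hs => mul_nonneg (Real.rpow_nonneg (le_of_lt hs) _) (hgnn s hs))
  refine ⟨M * C₀ + M * chat * K * M ^ (ℓ / 2 + α) + 1, by positivity, ?_⟩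
  intro t ht x hx y hy
  set T : ℝ := t ^ (1 / α) with hT_def
  have hT : 0 < T := Real.rpow_pos_of_pos ht _
  have hTpow : T ^ (-(ℓ / 2)) = t ^ (-(ℓ / (2 * α))) := by
    rw [hT_def, ← Real.rpow_mul ht.le]
    congr 1
    field_simp
  constructor
  · -- first bound
    have hle : ∀ᵐ s ∂(volume.restrict (Ioi (0:ℝ))),
        f (T * s) x y * g s ≤ M * T ^ (-(ℓ / 2)) * (s ^ (-(ℓ / 2)) * g s) := by
      filter_upwards [ae_restrict_mem measurableSet_Ioi] with s hs
      have hs0 : 0 < s := hs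
      have hTs0 : 0 < T * s := mul_pos hT hs0
      have h1 : f (T * s) x y ≤ M * (T * s) ^ (-(ℓ / 2)) := by
        calc f (T * s) x y
            ≤ M * (T * s) ^ (-(ℓ / 2)) * Real.exp (-(dist x y) ^ 2 / (M * (T * s))) :=
              hfb _ hTs0 x hx y hy
          _ ≤ M * (T * s) ^ (-(ℓ / 2)) * 1 := by
              apply mul_le_mul_of_nonneg_left _ (by positivity)
              apply Real.exp_le_one_iff.mpr
              apply div_nonpos_of_nonpos_of_nonneg (neg_nonpos.mpr (by positivity)) (by positivity)
          _ = M * (T * s) ^ (-(ℓ / 2)) := mul_one _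
      calc f (T * s) x y * g s ≤ M * (T * s) ^ (-(ℓ / 2)) * g s :=
            mul_le_mul_of_nonneg_right h1 (hgnn s hs0)
        _ = M * T ^ (-(ℓ / 2)) * (s ^ (-(ℓ / 2)) * g s) := by
            rw [Real.mul_rpow hT.le hs0.le]; ring
    have hnn : 0 ≤ᵐ[volume.restrict (Ioi (0:ℝ))] fun s => f (T * s) x y * g s := by
      filter_upwards [ae_restrict_mem measurableSet_Ioi] with s hs
      exact mul_nonneg (hf0 _ (mul_pos hT hs) x hx y hy) (hgnn s hs)
    have hInt : Integrable (fun s : ℝ => M * T ^ (-(ℓ / 2)) * (s ^ (-(ℓ / 2)) * g s))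
        (volume.restrict (Ioi (0:ℝ))) := hmomI.const_mul _
    have hmono := integral_mono_of_nonneg hnn hInt hle
    have hP : 0 < t ^ (-(ℓ / (2 * α))) := Real.rpow_pos_of_pos ht _
    calc (∫ s in Ioi (0:ℝ), f (T * s) x y * g s)
        ≤ ∫ s in Ioi (0:ℝ), M * T ^ (-(ℓ / 2)) * (s ^ (-(ℓ / 2)) * g s) := hmono
      _ = M * T ^ (-(ℓ / 2)) * C₀ := by rw [integral_const_mul, hC0_def]
      _ = (M * C₀) * t ^ (-(ℓ / (2 * α))) := by rw [hTpow]; ring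
      _ ≤ (M * C₀ + M * chat * K * M ^ (ℓ / 2 + α) + 1) * t ^ (-(ℓ / (2 * α))) := by
          apply mul_le_mul_of_nonneg_right _ hP.le
          have : 0 ≤ M * chat * K * M ^ (ℓ / 2 + α) := by positivity
          linarith
  · -- second bound
    intro hxy
    have hR : 0 < dist x y := dist_pos.mpr hxy
    set R : ℝ := dist x y with hR_def
    set c : ℝ := R ^ 2 / (M * T) with hc_def
    have hc : 0 < c := by positivity
    obtain ⟨hKint, hKbound⟩ := key_integral ha hc n hn
    have hle : ∀ᵐ s ∂(volume.restrict (Ioi (0:ℝ))),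
        f (T * s) x y * g s
          ≤ M * chat * T ^ (-(ℓ / 2)) * (s ^ (-a) * Real.exp (-(c / s))) := by
      filter_upwards [ae_restrict_mem measurableSet_Ioi] with s hs
      have hs0 : 0 < s := hs
      have hTs0 : 0 < T * s := mul_pos hT hs0
      have harg : -(R) ^ 2 / (M * (T * s)) = -(c / s) := by
        rw [hc_def]
        field_simp
      have h1 : f (T * s) x y ≤ M * (T * s) ^ (-(ℓ / 2)) * Real.exp (-(c / s)) := by
        have := hfb _ hTs0 x hx y hy
        rwa [← hR_def, harg] at this
      have h2 : g s ≤ chat * s ^ (-1 - α) := hgb s hs0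
      calc f (T * s) x y * g s
          ≤ (M * (T * s) ^ (-(ℓ / 2)) * Real.exp (-(c / s))) * (chat * s ^ (-1 - α)) := by
            apply mul_le_mul h1 h2 (hgnn s hs0) (by positivity)
        _ = M * chat * T ^ (-(ℓ / 2)) * (s ^ (-a) * Real.exp (-(c / s))) := by
            rw [Real.mul_rpow hT.le hs0.le, ha_def,
              show -(ℓ / 2 + 1 + α) = -(ℓ / 2) + (-1 - α) by ring,
              Real.rpow_add hs0]
            ring
    have hnn : 0 ≤ᵐ[volume.restrict (Ioi (0:ℝ))] fun s => f (T * s) x y * g s := by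
      filter_upwards [ae_restrict_mem measurableSet_Ioi] with s hs
      exact mul_nonneg (hf0 _ (mul_pos hT hs) x hx y hy) (hgnn s hs)
    have hInt : Integrable (fun s : ℝ => M * chat * T ^ (-(ℓ / 2)) * (s ^ (-a) * Real.exp (-(c / s))))
        (volume.restrict (Ioi (0:ℝ))) := hKint.const_mul _
    have hmono := integral_mono_of_nonneg hnn hInt hle
    -- compute c ^ (1 - a)
    have hcpow : c ^ (1 - a) = (M * T) ^ (ℓ / 2 + α) / R ^ (ℓ + 2 * α) := by
      have h1 : 1 - a = -(ℓ / 2 + α) := by rw [ha_def]; ring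
      rw [hc_def, h1, Real.rpow_neg (by positivity),
        Real.div_rpow (by positivity) (by positivity), inv_div]
      congr 1
      rw [show (R ^ 2 : ℝ) = R ^ (2:ℝ) by rw [← Real.rpow_natCast R 2]; norm_num,
        ← Real.rpow_mul hR.le]
      congr 1
      ring
    have hTα : T ^ α = t := by
      rw [hT_def, ← Real.rpow_mul ht.le, show 1 / α * α = 1 by field_simp, Real.rpow_one]
    have hTcomb : T ^ (-(ℓ / 2)) * (M * T) ^ (ℓ / 2 + α) = M ^ (ℓ / 2 + α) * t := by
      calc T ^ (-(ℓ / 2)) * (M * T) ^ (ℓ / 2 + α)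
          = M ^ (ℓ / 2 + α) * (T ^ (-(ℓ / 2)) * T ^ (ℓ / 2 + α)) := by
            rw [Real.mul_rpow hM.le hT.le]; ring
        _ = M ^ (ℓ / 2 + α) * T ^ (-(ℓ / 2) + (ℓ / 2 + α)) := by rw [← Real.rpow_add hT]
        _ = M ^ (ℓ / 2 + α) * T ^ α := by ring_nf
        _ = M ^ (ℓ / 2 + α) * t := by rw [hTα]
    have hRpow : 0 < R ^ (ℓ + 2 * α) := Real.rpow_pos_of_pos hR _
    calc (∫ s in Ioi (0:ℝ), f (T * s) x y * g s)
        ≤ ∫ s in Ioi (0:ℝ), M * chat * T ^ (-(ℓ / 2)) * (s ^ (-a) * Real.exp (-(c / s))) := hmono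
      _ = M * chat * T ^ (-(ℓ / 2)) * (∫ s in Ioi (0:ℝ), s ^ (-a) * Real.exp (-(c / s))) := by
          rw [integral_const_mul]
      _ ≤ M * chat * T ^ (-(ℓ / 2)) * (K * c ^ (1 - a)) := by
          apply mul_le_mul_of_nonneg_left _ (by positivity)
          rw [hK_def]
          exact hKbound
      _ = M * chat * K * (T ^ (-(ℓ / 2)) * (M * T) ^ (ℓ / 2 + α)) / R ^ (ℓ + 2 * α) := by
          rw [hcpow]; ring
      _ = (M * chat * K * M ^ (ℓ / 2 + α)) * t / R ^ (ℓ + 2 * α) := by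
          rw [hTcomb]; ring
      _ ≤ (M * C₀ + M * chat * K * M ^ (ℓ / 2 + α) + 1) * t / R ^ (ℓ + 2 * α) := by
          gcongr
          have : 0 ≤ M * C₀ := by positivity
          linarith
end

section
/- Suppose |p(t,x,y) − p(t,x₁,y₁)| ≤ c t^{-(2d-γ)/2} (|x-x₁| ∨ |y-y₁|)^γ for all t > 0 and points in D, with γ ∈ (0,1). Then the subordinated kernels satisfy |q(t,x,y) − q(t,x₁,y₁)| ≤ c' t^{-(2d-γ)/(2α)} (|x-x₁| ∨ |y-y₁|)^γ for a constant c' depending on c, d, γ, α. -/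
open MeasureTheory Real Set

/-- Hölder continuity transfers to the subordinated kernel:
`|p(t,x,y)-p(t,x₁,y₁)| ≤ c t^{-(2d-γ)/2} (|x-x₁| ∨ |y-y₁|)^γ` implies
`|q(t,x,y)-q(t,x₁,y₁)| ≤ c' t^{-(2d-γ)/(2α)} (|x-x₁| ∨ |y-y₁|)^γ`. -/
theorem subordinated_kernel_holder {d : ℕ} (D : Set (EuclideanSpace ℝ (Fin d)))
    (α γ c : ℝ) (hα : α ∈ Ioo (0 : ℝ) 1) (hγ : γ ∈ Ioo (0 : ℝ) 1) (hc : 0 < c)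
    (g : ℝ → ℝ) (hgm : Measurable g) (hgnn : ∀ s : ℝ, 0 < s → 0 ≤ g s)
    (hgint : (∫ s in Ioi (0 : ℝ), g s) = 1)
    (hgmom : IntegrableOn (fun s : ℝ => s ^ (-((2 * (d : ℝ) - γ) / 2)) * g s) (Ioi 0))
    (p : ℝ → EuclideanSpace ℝ (Fin d) → EuclideanSpace ℝ (Fin d) → ℝ)
    (hpm : ∀ x y, AEStronglyMeasurable (fun s : ℝ => p s x y) (volume.restrict (Ioi 0)))
    (hpi : ∀ t : ℝ, 0 < t → ∀ x ∈ D, ∀ y ∈ D,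
      IntegrableOn (fun s : ℝ => p (t ^ (1 / α) * s) x y * g s) (Ioi 0))
    (hholder : ∀ t : ℝ, 0 < t → ∀ x ∈ D, ∀ y ∈ D, ∀ x₁ ∈ D, ∀ y₁ ∈ D,
      |p t x y - p t x₁ y₁|
        ≤ c * t ^ (-(2 * (d : ℝ) - γ) / 2) * max (dist x x₁) (dist y y₁) ^ γ) :
    ∃ c' : ℝ, 0 < c' ∧ ∀ t : ℝ, 0 < t → ∀ x ∈ D, ∀ y ∈ D, ∀ x₁ ∈ D, ∀ y₁ ∈ D,
      |(∫ s in Ioi (0 : ℝ), p (t ^ (1 / α) * s) x y * g s) -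
          (∫ s in Ioi (0 : ℝ), p (t ^ (1 / α) * s) x₁ y₁ * g s)|
        ≤ c' * t ^ (-((2 * (d : ℝ) - γ) / (2 * α))) * max (dist x x₁) (dist y y₁) ^ γ := by

  obtain ⟨hα0, hα1⟩ := hα
  set β : ℝ := -((2 * (d : ℝ) - γ) / 2) with hβ
  set I : ℝ := ∫ s in Ioi (0:ℝ), s ^ β * g s with hI
  have hInn : 0 ≤ I := by
    apply setIntegral_nonneg measurableSet_Ioi
    intro s hs
    exact mul_nonneg (rpow_nonneg hs.le β) (hgnn s hs)
  refine ⟨c * I + 1, by positivity, ?_⟩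
  intro t ht x hx y hy x₁ hx₁ y₁ hy₁
  set M : ℝ := max (dist x x₁) (dist y y₁) with hM
  have hM0 : 0 ≤ M := le_trans dist_nonneg (le_max_left _ _)
  have hts : 0 < t ^ (1/α) := rpow_pos_of_pos ht _
  have h1 := hpi t ht x hx y hy
  have h2 := hpi t ht x₁ hx₁ y₁ hy₁
  rw [← integral_sub h1 h2]
  have hbound : Integrable (fun s : ℝ => c * t ^ (β / α) * M ^ γ * (s ^ β * g s))
      (volume.restrict (Ioi 0)) := hgmom.const_mul _
  have key : ‖∫ s in Ioi (0:ℝ),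
        (p (t ^ (1/α) * s) x y * g s - p (t ^ (1/α) * s) x₁ y₁ * g s)‖
      ≤ ∫ s in Ioi (0:ℝ), c * t ^ (β / α) * M ^ γ * (s ^ β * g s) := by
    apply norm_integral_le_of_norm_le hbound
    filter_upwards [ae_restrict_mem measurableSet_Ioi] with s hs
    have hs0 : (0:ℝ) < s := hs
    have hh := hholder (t ^ (1/α) * s) (mul_pos hts hs0) x hx y hy x₁ hx₁ y₁ hy₁
    have hpow : (t ^ (1/α) * s) ^ (-(2 * (d:ℝ) - γ) / 2) = t ^ (β / α) * s ^ β := by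
      have he : -(2 * (d:ℝ) - γ) / 2 = β := by rw [hβ]; ring
      rw [he, mul_rpow hts.le hs0.le, ← rpow_mul ht.le]
      congr 1
      field_simp
    rw [hpow] at hh
    rw [Real.norm_eq_abs, ← sub_mul, abs_mul, abs_of_nonneg (hgnn s hs0)]
    calc |p (t ^ (1/α) * s) x y - p (t ^ (1/α) * s) x₁ y₁| * g s
        ≤ (c * (t ^ (β / α) * s ^ β) * M ^ γ) * g s :=
          mul_le_mul_of_nonneg_right hh (hgnn s hs0)
      _ = c * t ^ (β / α) * M ^ γ * (s ^ β * g s) := by ring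
  rw [Real.norm_eq_abs] at key
  have hint : (∫ s in Ioi (0:ℝ), c * t ^ (β / α) * M ^ γ * (s ^ β * g s))
      = c * t ^ (β / α) * M ^ γ * I := by
    rw [hI]; exact MeasureTheory.integral_const_mul _ _
  rw [hint] at key
  have hexp : β / α = -((2 * (d:ℝ) - γ) / (2 * α)) := by
    rw [hβ]
    field_simp
  rw [hexp] at key
  refine key.trans ?_
  have htp : (0:ℝ) < t ^ (-((2 * (d:ℝ) - γ) / (2 * α))) := rpow_pos_of_pos ht _
  have hMγ : (0:ℝ) ≤ M ^ γ := rpow_nonneg hM0 γ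
  nlinarith [mul_nonneg htp.le hMγ, mul_nonneg (mul_nonneg htp.le hMγ) hInn]
end

section
/- Suppose ‖P_t − \tilde{P}_t‖_{p→p} ≤ c' (t^{-γ} + 1) ε for all t > 0, where γ ∈ (0,1) and ε ≥ 0. Then the subordinated semigroups satisfy ‖Q_t − \tilde{Q}_t‖_{p→p} ≤ ĉ (1 + t^{-γ/α}) ε for all t > 0, for a constant ĉ depending on c', γ, α. -/
open MeasureTheory Real Set

lemma aesm_scale {E : Type*} [NormedAddCommGroup E] {F : ℝ → E}
    (hF : AEStronglyMeasurable F (volume.restrict (Ioi 0))) {c : ℝ} (hc : 0 < c) :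
    AEStronglyMeasurable (fun s : ℝ => F (c * s)) (volume.restrict (Ioi 0)) := by
  apply hF.comp_quasiMeasurePreserving
  refine ⟨measurable_const_mul c, ?_⟩
  have hpre : (fun s : ℝ => c * s) ⁻¹' (Ioi 0) = Ioi 0 := by
    ext x; simp [mul_pos_iff_of_pos_left, hc]
  have h1 : (volume.restrict (Ioi (0:ℝ))).map (fun s => c * s)
      = ((volume : Measure ℝ).map (c * ·)).restrict (Ioi 0) := by
    rw [Measure.restrict_map (measurable_const_mul c) measurableSet_Ioi, hpre]
  rw [h1, Real.map_volume_mul_left (ne_of_gt hc), Measure.restrict_smul]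
  exact Measure.smul_absolutelyContinuous

/-- Stability of subordinated semigroups: if `‖P_t − P̃_t‖ ≤ c'(t^{-γ}+1)ε` then the
subordinated semigroups satisfy `‖Q_t − Q̃_t‖ ≤ ĉ (1 + t^{-γ/α}) ε`. -/
theorem subordinated_semigroup_stability {E : Type*} [NormedAddCommGroup E]
    [NormedSpace ℝ E] (α γ c' ε : ℝ) (hα : α ∈ Ioo (0 : ℝ) 1) (hγ : γ ∈ Ioo (0 : ℝ) 1)
    (hc' : 0 < c') (hε : 0 ≤ ε)
    (g : ℝ → ℝ) (hgm : Measurable g) (hgnn : ∀ s : ℝ, 0 ≤ g s)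
    (hgi : IntegrableOn g (Ioi 0)) (hgint : (∫ s in Ioi (0 : ℝ), g s) = 1)
    (hgmom : IntegrableOn (fun s : ℝ => s ^ (-γ) * g s) (Ioi 0))
    (P Pt : ℝ → E →L[ℝ] E)
    (hP : ∀ s : ℝ, ‖P s‖ ≤ 1) (hPt : ∀ s : ℝ, ‖Pt s‖ ≤ 1)
    (hPm : ∀ f : E, AEStronglyMeasurable (fun s : ℝ => P s f) (volume.restrict (Ioi 0)))
    (hPtm : ∀ f : E, AEStronglyMeasurable (fun s : ℝ => Pt s f) (volume.restrict (Ioi 0)))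
    (hnm : Measurable (fun s : ℝ => ‖P s - Pt s‖))
    (hstab : ∀ t : ℝ, 0 < t → ‖P t - Pt t‖ ≤ c' * (t ^ (-γ) + 1) * ε)
    (Q Qt : ℝ → E →L[ℝ] E)
    (hQ : ∀ t : ℝ, 0 < t → ∀ f : E,
      Q t f = ∫ s in Ioi (0 : ℝ), g s • P (t ^ (1 / α) * s) f)
    (hQt : ∀ t : ℝ, 0 < t → ∀ f : E,
      Qt t f = ∫ s in Ioi (0 : ℝ), g s • Pt (t ^ (1 / α) * s) f) :
    ∃ chat : ℝ, 0 < chat ∧ ∀ t : ℝ, 0 < t →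
      ‖Q t - Qt t‖ ≤ chat * (1 + t ^ (-(γ / α))) * ε := by
  obtain ⟨hα0, hα1⟩ := hα
  obtain ⟨hγ0, hγ1⟩ := hγ
  set I : ℝ := ∫ s in Ioi (0 : ℝ), s ^ (-γ) * g s with hI
  have hInn : 0 ≤ I :=
    setIntegral_nonneg measurableSet_Ioi
      (fun s hs => mul_nonneg (Real.rpow_nonneg (le_of_lt hs) _) (hgnn s))
  refine ⟨c' * (I + 1), by positivity, ?_⟩
  intro t ht
  set c : ℝ := t ^ (1 / α) with hcdef
  have hc : 0 < c := Real.rpow_pos_of_pos ht _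
  have hcg : c ^ (-γ) = t ^ (-(γ / α)) := by
    rw [hcdef, ← Real.rpow_mul ht.le]
    congr 1
    field_simp
  -- key estimate per vector
  have key : ∀ f : E, ‖Q t f - Qt t f‖ ≤ (c' * (I + 1)) * (1 + t ^ (-(γ / α))) * ε * ‖f‖ := by
    intro f
    have hmP : AEStronglyMeasurable (fun s : ℝ => g s • P (c * s) f)
        (volume.restrict (Ioi 0)) :=
      (hgm.aestronglyMeasurable.restrict).smul (aesm_scale (hPm f) hc)
    have hmPt : AEStronglyMeasurable (fun s : ℝ => g s • Pt (c * s) f)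
        (volume.restrict (Ioi 0)) :=
      (hgm.aestronglyMeasurable.restrict).smul (aesm_scale (hPtm f) hc)
    have hgif : IntegrableOn (fun s : ℝ => ‖f‖ * g s) (Ioi 0) := hgi.const_mul _
    have hiP : IntegrableOn (fun s : ℝ => g s • P (c * s) f) (Ioi 0) := by
      refine Integrable.mono' hgif hmP ?_
      filter_upwards [self_mem_ae_restrict measurableSet_Ioi] with s _
      rw [norm_smul, Real.norm_eq_abs, abs_of_nonneg (hgnn s)]
      calc g s * ‖P (c * s) f‖ ≤ g s * (‖P (c * s)‖ * ‖f‖) :=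
            mul_le_mul_of_nonneg_left ((P (c * s)).le_opNorm f) (hgnn s)
        _ ≤ g s * (1 * ‖f‖) := by
            apply mul_le_mul_of_nonneg_left _ (hgnn s)
            exact mul_le_mul_of_nonneg_right (hP _) (norm_nonneg f)
        _ = ‖f‖ * g s := by ring
    have hiPt : IntegrableOn (fun s : ℝ => g s • Pt (c * s) f) (Ioi 0) := by
      refine Integrable.mono' hgif hmPt ?_
      filter_upwards [self_mem_ae_restrict measurableSet_Ioi] with s _
      rw [norm_smul, Real.norm_eq_abs, abs_of_nonneg (hgnn s)]
      calc g s * ‖Pt (c * s) f‖ ≤ g s * (‖Pt (c * s)‖ * ‖f‖) :=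
            mul_le_mul_of_nonneg_left ((Pt (c * s)).le_opNorm f) (hgnn s)
        _ ≤ g s * (1 * ‖f‖) := by
            apply mul_le_mul_of_nonneg_left _ (hgnn s)
            exact mul_le_mul_of_nonneg_right (hPt _) (norm_nonneg f)
        _ = ‖f‖ * g s := by ring
    have hdiff : Q t f - Qt t f
        = ∫ s in Ioi (0 : ℝ), g s • (P (c * s) f - Pt (c * s) f) := by
      rw [hQ t ht f, hQt t ht f, ← integral_sub hiP hiPt]
      simp [smul_sub]
    -- bound function
    set B : ℝ → ℝ := fun s => (c' * ε * ‖f‖) * (c ^ (-γ) * (s ^ (-γ) * g s) + g s)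
      with hB
    have hiB : IntegrableOn B (Ioi 0) :=
      (((hgmom.const_mul (c ^ (-γ))).add hgi).const_mul _)
    have hbound : ∀ s ∈ Ioi (0 : ℝ), ‖g s • (P (c * s) f - Pt (c * s) f)‖ ≤ B s := by
      intro s hs
      have hcs : 0 < c * s := mul_pos hc hs
      have h1 : ‖P (c * s) f - Pt (c * s) f‖ ≤ c' * ((c * s) ^ (-γ) + 1) * ε * ‖f‖ := by
        have := (P (c * s) - Pt (c * s)).le_opNorm f
        rw [ContinuousLinearMap.sub_apply] at this
        exact this.trans (mul_le_mul_of_nonneg_right (hstab _ hcs) (norm_nonneg f))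
      have hmulr : (c * s) ^ (-γ) = c ^ (-γ) * s ^ (-γ) :=
        Real.mul_rpow hc.le hs.le
      rw [norm_smul, Real.norm_eq_abs, abs_of_nonneg (hgnn s)]
      calc g s * ‖P (c * s) f - Pt (c * s) f‖
          ≤ g s * (c' * ((c * s) ^ (-γ) + 1) * ε * ‖f‖) :=
            mul_le_mul_of_nonneg_left h1 (hgnn s)
        _ = B s := by rw [hB, hmulr]; ring
    have hnorm : ‖∫ s in Ioi (0 : ℝ), g s • (P (c * s) f - Pt (c * s) f)‖
        ≤ ∫ s in Ioi (0 : ℝ), B s := by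
      refine norm_integral_le_of_norm_le hiB ?_
      filter_upwards [self_mem_ae_restrict measurableSet_Ioi] with s hs
      exact hbound s hs
    have hBval : (∫ s in Ioi (0 : ℝ), B s)
        = (c' * ε * ‖f‖) * (c ^ (-γ) * I + 1) := by
      rw [hB]
      rw [integral_const_mul, integral_add (hgmom.const_mul _) hgi,
        integral_const_mul, hgint, ← hI]
    rw [hdiff]
    refine hnorm.trans ?_
    rw [hBval, hcg]
    set T : ℝ := t ^ (-(γ / α)) with hT
    have hTpos : 0 < T := Real.rpow_pos_of_pos ht _
    have : c' * ε * ‖f‖ * (T * I + 1) ≤ c' * (I + 1) * (1 + T) * ε * ‖f‖ := by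
      have hf : 0 ≤ ‖f‖ := norm_nonneg f
      nlinarith [mul_nonneg (mul_nonneg hc'.le (mul_nonneg hε hf))
        (add_nonneg hInn hTpos.le)]
    linarith
  -- conclude operator norm bound
  have hnn : 0 ≤ (c' * (I + 1)) * (1 + t ^ (-(γ / α))) * ε := by
    have := Real.rpow_pos_of_pos ht (-(γ / α))
    positivity
  refine (Q t - Qt t).opNorm_le_bound hnn ?_
  intro f
  rw [ContinuousLinearMap.sub_apply]
  exact key f
end

section
/- For constants M, A, ĉ > 0, α ∈ (0,1), ℓ ≥ 0, and for all t > 0, r ≥ 0: M t^{-ℓ/(2α)} ∫_0^∞ s^{-ℓ/2} exp(-r²/(M t^{1/α}s)) g(α,s) ds ≤ C min(t^{-ℓ/(2α)}, t · r^{-(ℓ+2α)}) where C depends only on M, ℓ, α, provided g(α,s) ≤ ĉ s^{-1-α} for all s > 0 and ∫_0^1 s^{-ℓ/2} g(α,s) ds < ∞ and ∫_0^∞ g(α,s) ds = 1. -/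
open MeasureTheory Real Set

lemma aux_eqon' {p a : ℝ} : ∀ x ∈ Ioi (0:ℝ),
    (|(-1:ℝ)| * x ^ ((-1:ℝ) - 1)) • ((x ^ (-1:ℝ)) ^ (p - 1) * Real.exp (-(a * x ^ (-1:ℝ))))
      = x ^ (-p - 1) * Real.exp (-(a / x)) := by
  intro x hx
  have hx0 : (0:ℝ) < x := hx
  rw [smul_eq_mul, abs_neg, abs_one, one_mul, ← Real.rpow_mul hx0.le,
    Real.rpow_neg_one, ← mul_assoc, ← Real.rpow_add hx0,
    show (-1:ℝ) - 1 + -1 * (p - 1) = -p - 1 by ring, ← div_eq_mul_inv]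

lemma aux_integrable {p a : ℝ} (hp : 0 < p) (ha : 0 < a) :
    IntegrableOn (fun s : ℝ => s ^ (-p - 1) * Real.exp (-(a / s))) (Ioi (0:ℝ)) := by
  have base : IntegrableOn (fun y : ℝ => y ^ (p - 1) * Real.exp (-(a * y))) (Ioi 0) := by
    have h := integrableOn_rpow_mul_exp_neg_mul_rpow (p := 1) (s := p - 1) (b := a)
      (by linarith) one_pos ha
    refine h.congr_fun (fun x hx => ?_) measurableSet_Ioi
    dsimp only
    rw [Real.rpow_one, neg_mul]
  have h2 := (integrableOn_Ioi_comp_rpow_iff'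
    (fun y : ℝ => y ^ (p - 1) * Real.exp (-(a * y))) (p := -1) (by norm_num)).2 base
  refine h2.congr_fun (fun x hx => ?_) measurableSet_Ioi
  have hx0 : (0:ℝ) < x := hx
  simp only [smul_eq_mul]
  rw [← Real.rpow_mul hx0.le, Real.rpow_neg_one, ← mul_assoc, ← Real.rpow_add hx0,
    show (-1:ℝ) - 1 + -1 * (p - 1) = -p - 1 by ring, ← div_eq_mul_inv]

lemma aux_value {p a : ℝ} (hp : 0 < p) (ha : 0 < a) :
    (∫ s in Ioi (0:ℝ), s ^ (-p - 1) * Real.exp (-(a / s))) = (1/a) ^ p * Real.Gamma p := by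
  rw [← integral_rpow_mul_exp_neg_mul_Ioi hp ha,
      ← integral_comp_rpow_Ioi (fun y => y ^ (p - 1) * Real.exp (-(a * y))) (p := -1) (by norm_num)]
  exact (setIntegral_congr_fun measurableSet_Ioi (aux_eqon' (p := p) (a := a))).symm

/-- The key quantitative estimate for the subordinated gradient bound:
`M t^{-ℓ/(2α)} ∫_0^∞ s^{-ℓ/2} e^{-r²/(M t^{1/α} s)} g(α,s) ds
  ≤ C min(t^{-ℓ/(2α)}, t r^{-(ℓ+2α)})`. -/
theorem subordinated_key_estimate (α ℓ M chat : ℝ) (hα : α ∈ Ioo (0 : ℝ) 1)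
    (hℓ : 0 ≤ ℓ) (hM : 0 < M) (hchat : 0 < chat)
    (g : ℝ → ℝ) (hgm : Measurable g) (hgnn : ∀ s : ℝ, 0 < s → 0 ≤ g s)
    (hgb : ∀ s : ℝ, 0 < s → g s ≤ chat * s ^ (-1 - α))
    (hgl : IntegrableOn (fun s : ℝ => s ^ (-(ℓ / 2)) * g s) (Ioc 0 1))
    (hgint : (∫ s in Ioi (0 : ℝ), g s) = 1) :
    ∃ C : ℝ, 0 < C ∧ ∀ t : ℝ, 0 < t → ∀ r : ℝ, 0 ≤ r →
      (M * t ^ (-(ℓ / (2 * α))) *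
        ∫ s in Ioi (0 : ℝ),
          s ^ (-(ℓ / 2)) * Real.exp (-(r ^ 2) / (M * t ^ (1 / α) * s)) * g s)
        ≤ C * t ^ (-(ℓ / (2 * α))) ∧
      (0 < r →
        (M * t ^ (-(ℓ / (2 * α))) *
          ∫ s in Ioi (0 : ℝ),
            s ^ (-(ℓ / 2)) * Real.exp (-(r ^ 2) / (M * t ^ (1 / α) * s)) * g s)
          ≤ C * t * r ^ (-(ℓ + 2 * α))) := by
  obtain ⟨hα0, hα1⟩ := hα
  have hgInt : IntegrableOn g (Ioi 0) := by
    by_contra h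
    rw [MeasureTheory.integral_undef h] at hgint
    norm_num at hgint
  set I₁ : ℝ := ∫ s in Ioc (0:ℝ) 1, s ^ (-(ℓ/2)) * g s with hI₁def
  have hI₁nn : 0 ≤ I₁ := setIntegral_nonneg measurableSet_Ioc
    (fun s hs => mul_nonneg (Real.rpow_nonneg hs.1.le _) (hgnn s hs.1))
  have hℓ2 : 0 ≤ ℓ / 2 := by linarith
  have hp0 : 0 < ℓ/2 + α := by linarith
  have hΓ : 0 < Real.Gamma (ℓ/2 + α) := Real.Gamma_pos_of_pos hp0
  set C₁ : ℝ := M * (I₁ + 1) with hC₁def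
  set C₂ : ℝ := M * chat * Real.Gamma (ℓ/2 + α) * M ^ (ℓ/2 + α) with hC₂def
  have hC₁pos : 0 < C₁ := mul_pos hM (by linarith)
  have hC₂pos : 0 < C₂ := by
    have : (0:ℝ) < M ^ (ℓ/2 + α) := Real.rpow_pos_of_pos hM _
    positivity
  refine ⟨max C₁ C₂, lt_max_of_lt_left hC₁pos, fun t ht r hr => ?_⟩
  have htα : (0:ℝ) < t ^ (1/α) := Real.rpow_pos_of_pos ht _
  have hte : (0:ℝ) < t ^ (-(ℓ/(2*α))) := Real.rpow_pos_of_pos ht _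
  set f : ℝ → ℝ :=
    fun s => s ^ (-(ℓ / 2)) * Real.exp (-(r ^ 2) / (M * t ^ (1 / α) * s)) * g s with hfdef
  have hfm : Measurable f := by
    apply Measurable.mul _ hgm
    apply Measurable.mul (by fun_prop : Measurable fun s : ℝ => s ^ (-(ℓ / 2)))
    exact (measurable_const.div ((measurable_const.mul measurable_id))).exp
  have hfnn : ∀ s : ℝ, 0 < s → 0 ≤ f s := fun s hs =>
    mul_nonneg (mul_nonneg (Real.rpow_nonneg hs.le _) (Real.exp_nonneg _)) (hgnn s hs)
  have hexple : ∀ s : ℝ, 0 < s → Real.exp (-(r ^ 2) / (M * t ^ (1 / α) * s)) ≤ 1 := by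
    intro s hs
    rw [Real.exp_le_one_iff]
    exact div_nonpos_of_nonpos_of_nonneg (neg_nonpos.2 (sq_nonneg r)) (by positivity)
  have hb1 : ∀ s ∈ Ioc (0:ℝ) 1, f s ≤ s ^ (-(ℓ/2)) * g s := by
    intro s hs
    have h1 := hexple s hs.1
    calc f s ≤ s ^ (-(ℓ/2)) * 1 * g s := by
          exact mul_le_mul_of_nonneg_right
            (mul_le_mul_of_nonneg_left h1 (Real.rpow_nonneg hs.1.le _)) (hgnn s hs.1)
      _ = s ^ (-(ℓ/2)) * g s := by rw [mul_one]
  have hb2 : ∀ s ∈ Ioi (1:ℝ), f s ≤ g s := by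
    intro s hs
    have hs1 : (1:ℝ) ≤ s := le_of_lt hs
    have hs0 : (0:ℝ) < s := lt_of_lt_of_le one_pos hs1
    have hA : s ^ (-(ℓ/2)) ≤ 1 :=
      Real.rpow_le_one_of_one_le_of_nonpos hs1 (neg_nonpos.2 hℓ2)
    calc f s ≤ 1 * 1 * g s := by
          exact mul_le_mul_of_nonneg_right
            (mul_le_mul hA (hexple s hs0) (Real.exp_nonneg _) one_pos.le) (hgnn s hs0)
      _ = g s := by rw [one_mul, one_mul]
  have hint1 : IntegrableOn f (Ioc 0 1) := by
    refine Integrable.mono' hgl hfm.aestronglyMeasurable.restrict ?_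
    rw [ae_restrict_iff' measurableSet_Ioc]
    filter_upwards with s hs
    rw [Real.norm_eq_abs, abs_of_nonneg (hfnn s hs.1)]
    exact hb1 s hs
  have hgInt1 : IntegrableOn g (Ioi 1) := hgInt.mono_set (Ioi_subset_Ioi one_pos.le)
  have hint2 : IntegrableOn f (Ioi 1) := by
    refine Integrable.mono' hgInt1 hfm.aestronglyMeasurable.restrict ?_
    rw [ae_restrict_iff' measurableSet_Ioi]
    filter_upwards with s hs
    have hs0 : (0:ℝ) < s := lt_trans one_pos hs
    rw [Real.norm_eq_abs, abs_of_nonneg (hfnn s hs0)]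
    exact hb2 s hs
  have hunion : Ioc (0:ℝ) 1 ∪ Ioi 1 = Ioi 0 := Ioc_union_Ioi_eq_Ioi zero_le_one
  have hintf : IntegrableOn f (Ioi 0) := by
    rw [← hunion]; exact hint1.union hint2
  have hsplit : (∫ s in Ioi (0:ℝ), f s) = (∫ s in Ioc (0:ℝ) 1, f s) + ∫ s in Ioi (1:ℝ), f s := by
    rw [← hunion]
    exact setIntegral_union (Ioc_disjoint_Ioi le_rfl) measurableSet_Ioi hint1 hint2
  have hJ1 : (∫ s in Ioc (0:ℝ) 1, f s) ≤ I₁ :=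
    setIntegral_mono_on hint1 hgl measurableSet_Ioc hb1
  have hJ2 : (∫ s in Ioi (1:ℝ), f s) ≤ 1 := by
    calc (∫ s in Ioi (1:ℝ), f s) ≤ ∫ s in Ioi (1:ℝ), g s :=
          setIntegral_mono_on hint2 hgInt1 measurableSet_Ioi hb2
      _ ≤ ∫ s in Ioi (0:ℝ), g s := by
          refine setIntegral_mono_set hgInt ?_ (HasSubset.Subset.eventuallyLE (Ioi_subset_Ioi one_pos.le))
          exact (ae_restrict_iff' measurableSet_Ioi).2 (ae_of_all _ fun s hs => hgnn s hs)
      _ = 1 := hgint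
  have hJ : (∫ s in Ioi (0:ℝ), f s) ≤ I₁ + 1 := by
    rw [hsplit]; exact add_le_add hJ1 hJ2
  constructor
  · calc M * t ^ (-(ℓ/(2*α))) * ∫ s in Ioi (0:ℝ), f s
        ≤ M * t ^ (-(ℓ/(2*α))) * (I₁ + 1) :=
          mul_le_mul_of_nonneg_left hJ (by positivity)
      _ = C₁ * t ^ (-(ℓ/(2*α))) := by rw [hC₁def]; ring
      _ ≤ max C₁ C₂ * t ^ (-(ℓ/(2*α))) :=
          mul_le_mul_of_nonneg_right (le_max_left _ _) hte.le
  · intro hrpos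
    set a : ℝ := r ^ 2 / (M * t ^ (1/α)) with hadef
    have ha : 0 < a := by positivity
    have hb3 : ∀ s ∈ Ioi (0:ℝ), f s ≤
        chat * (s ^ (-(ℓ/2 + α) - 1) * Real.exp (-(a / s))) := by
      intro s hs
      have hs0 : (0:ℝ) < s := hs
      have harg : -(r ^ 2) / (M * t ^ (1 / α) * s) = -(a / s) := by
        rw [hadef, div_div, neg_div]
      calc f s ≤ s ^ (-(ℓ/2)) * Real.exp (-(r ^ 2) / (M * t ^ (1 / α) * s))
            * (chat * s ^ (-1 - α)) :=
            mul_le_mul_of_nonneg_left (hgb s hs0) (by positivity)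
        _ = chat * (s ^ (-(ℓ/2)) * s ^ (-1 - α)
              * Real.exp (-(a / s))) := by rw [harg]; ring
        _ = chat * (s ^ (-(ℓ/2 + α) - 1) * Real.exp (-(a / s))) := by
            rw [← Real.rpow_add hs0, show -(ℓ/2) + (-1 - α) = -(ℓ/2 + α) - 1 by ring]
    have hgamInt : IntegrableOn
        (fun s : ℝ => chat * (s ^ (-(ℓ/2 + α) - 1) * Real.exp (-(a / s)))) (Ioi 0) :=
      (aux_integrable hp0 ha).const_mul chat
    have hJ3 : (∫ s in Ioi (0:ℝ), f s) ≤ chat * ((1/a) ^ (ℓ/2 + α) * Real.Gamma (ℓ/2 + α)) := by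
      calc (∫ s in Ioi (0:ℝ), f s)
          ≤ ∫ s in Ioi (0:ℝ), chat * (s ^ (-(ℓ/2 + α) - 1) * Real.exp (-(a / s))) :=
            setIntegral_mono_on hintf hgamInt measurableSet_Ioi hb3
        _ = chat * ∫ s in Ioi (0:ℝ), s ^ (-(ℓ/2 + α) - 1) * Real.exp (-(a / s)) :=
            integral_const_mul _ _
        _ = chat * ((1/a) ^ (ℓ/2 + α) * Real.Gamma (ℓ/2 + α)) := by
            rw [aux_value hp0 ha]
    have h1 : (1/a : ℝ) = M * t ^ (1/α) / r ^ 2 := by rw [hadef, one_div_div]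
    have h2 : (1/a : ℝ) ^ (ℓ/2 + α) =
        M ^ (ℓ/2 + α) * (t ^ ((1/α) * (ℓ/2 + α)) * r ^ (-(ℓ + 2*α))) := by
      rw [h1, Real.div_rpow (by positivity) (sq_nonneg r), Real.mul_rpow hM.le htα.le,
        ← Real.rpow_mul ht.le, ← Real.rpow_natCast r 2, ← Real.rpow_mul hrpos.le,
        div_eq_mul_inv, ← Real.rpow_neg hrpos.le]
      norm_num
      rw [show -(2 * (ℓ/2 + α)) = -(ℓ + 2*α) by ring]
      ring
    have ht2 : t ^ (-(ℓ/(2*α))) * t ^ ((1/α) * (ℓ/2 + α)) = t := by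
      rw [← Real.rpow_add ht]
      rw [show -(ℓ/(2*α)) + (1/α) * (ℓ/2 + α) = 1 by field_simp; ring, Real.rpow_one]
    calc M * t ^ (-(ℓ/(2*α))) * ∫ s in Ioi (0:ℝ), f s
        ≤ M * t ^ (-(ℓ/(2*α))) * (chat * ((1/a) ^ (ℓ/2 + α) * Real.Gamma (ℓ/2 + α))) :=
          mul_le_mul_of_nonneg_left hJ3 (by positivity)
      _ = C₂ * (t ^ (-(ℓ/(2*α))) * t ^ ((1/α) * (ℓ/2 + α))) * r ^ (-(ℓ + 2*α)) := by
          rw [h2, hC₂def]; ring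
      _ = C₂ * t * r ^ (-(ℓ + 2*α)) := by rw [ht2]
      _ ≤ max C₁ C₂ * t * r ^ (-(ℓ + 2*α)) := by
          have : (0:ℝ) < r ^ (-(ℓ + 2*α)) := Real.rpow_pos_of_pos hrpos _
          exact mul_le_mul_of_nonneg_right
            (mul_le_mul_of_nonneg_right (le_max_right _ _) ht.le) this.le
end

section
/- Suppose |p(t,x,y) − \tilde p(t,x,y)| ≤ c' t^{-d/2} exp(-|x-y|²/(ct)) (t^{-γ} + 1) ε for all t > 0 and x,y ∈ ℝ^d, with γ ∈ (0,1) and ε ≥ 0. Then the subordinated kernels satisfy |q(t,x,y) − \tilde q(t,x,y)| ≤ C ε [ min(t^{-d/(2α)}, t/|x-y|^{d+2α}) + min(t^{-(d+2γ)/(2α)}, t/|x-y|^{d+2γ+2α}) ] for a constant C depending on c, c', d, γ, α. -/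
open MeasureTheory Real Set

lemma aux_exp_neg_le (n : ℕ) {z m : ℝ} (hz : 1 ≤ z) (hm : m ≤ n) :
    Real.exp (-z) ≤ (n.factorial : ℝ) * z ^ (-m) := by
  have hz0 : 0 < z := lt_of_lt_of_le one_pos hz
  have hn : (0:ℝ) < (n.factorial : ℝ) := by positivity
  have h1 : z ^ n / (n.factorial : ℝ) ≤ Real.exp z := Real.pow_div_factorial_le_exp (x := z) hz0.le n
  have h2 : z ^ (-(n:ℝ)) ≤ z ^ (-m) :=
    Real.rpow_le_rpow_of_exponent_le hz (by linarith)
  have h3 : Real.exp (-z) ≤ (n.factorial : ℝ) * z ^ (-(n:ℝ)) := by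
    rw [Real.exp_neg, Real.rpow_neg hz0.le, Real.rpow_natCast]
    rw [inv_le_iff_one_le_mul₀ (Real.exp_pos z)]
    have hzn : (0:ℝ) < z ^ n := by positivity
    rw [div_le_iff₀ hn] at h1
    calc (1:ℝ) = z ^ n * (z ^ n)⁻¹ := by field_simp
      _ ≤ Real.exp z * (n.factorial : ℝ) * (z ^ n)⁻¹ := by
          apply mul_le_mul_of_nonneg_right h1 (by positivity)
      _ = (n.factorial : ℝ) * (z ^ n)⁻¹ * Real.exp z := by ring
  calc Real.exp (-z) ≤ (n.factorial : ℝ) * z ^ (-(n:ℝ)) := h3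
    _ ≤ (n.factorial : ℝ) * z ^ (-m) := by nlinarith

section
variable {α chat : ℝ} {g : ℝ → ℝ}

lemma aux_g_integrable (hgint : (∫ s in Ioi (0 : ℝ), g s) = 1) :
    IntegrableOn g (Ioi (0:ℝ)) := by
  by_contra h
  rw [MeasureTheory.integral_undef h] at hgint
  norm_num at hgint

lemma aux_rpow_g_integrable
    (hgm : Measurable g) (hgnn : ∀ s : ℝ, 0 < s → 0 ≤ g s)
    (hgint : (∫ s in Ioi (0 : ℝ), g s) = 1)
    (hgl : ∀ m : ℝ, 0 ≤ m → IntegrableOn (fun s : ℝ => s ^ (-m) * g s) (Ioc 0 1))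
    {a : ℝ} (ha : 0 ≤ a) :
    IntegrableOn (fun s : ℝ => s ^ (-a) * g s) (Ioi (0:ℝ)) := by
  have h1 : IntegrableOn (fun s : ℝ => s ^ (-a) * g s) (Ioc (0:ℝ) 1) := hgl a ha
  have h2 : IntegrableOn (fun s : ℝ => s ^ (-a) * g s) (Ioi (1:ℝ)) := by
    apply Integrable.mono ((aux_g_integrable hgint).mono_set (Ioi_subset_Ioi zero_le_one))
    · exact (((by fun_prop : Measurable fun s : ℝ => s ^ (-a))).mul hgm).aestronglyMeasurable
    · filter_upwards [ae_restrict_mem measurableSet_Ioi] with s hs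
      have hs1 : (1:ℝ) < s := hs
      have hs0 : (0:ℝ) < s := lt_trans one_pos hs1
      have hb : s ^ (-a) ≤ 1 :=
        Real.rpow_le_one_of_one_le_of_nonpos hs1.le (by linarith)
      have hgs := hgnn s hs0
      rw [Real.norm_eq_abs, Real.norm_eq_abs, abs_of_nonneg hgs,
        abs_of_nonneg (mul_nonneg (Real.rpow_nonneg hs0.le _) hgs)]
      nlinarith [Real.rpow_nonneg hs0.le (-a)]
  have := h1.union h2
  rwa [Set.Ioc_union_Ioi_eq_Ioi zero_le_one] at this

lemma aux_key {ℓ c : ℝ} (hα : 0 < α) (hℓ : 0 ≤ ℓ) (hc : 0 < c) (hchat : 0 < chat)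
    (hgm : Measurable g) (hgnn : ∀ s : ℝ, 0 < s → 0 ≤ g s)
    (hgint : (∫ s in Ioi (0 : ℝ), g s) = 1)
    (hgb : ∀ s : ℝ, 0 < s → g s ≤ chat * s ^ (-1 - α))
    (hgl : ∀ m : ℝ, 0 ≤ m → IntegrableOn (fun s : ℝ => s ^ (-m) * g s) (Ioc 0 1)) :
    ∃ K : ℝ, 0 < K ∧ ∀ τ r : ℝ, 0 < τ → 0 ≤ r →
      IntegrableOn (fun s : ℝ => (τ*s)^(-(ℓ/2)) * Real.exp (-r^2/(c*(τ*s))) * g s) (Ioi 0) ∧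
      (∫ s in Ioi (0:ℝ), (τ*s)^(-(ℓ/2)) * Real.exp (-r^2/(c*(τ*s))) * g s) ≤ K * τ^(-(ℓ/2)) ∧
      (0 < r → (∫ s in Ioi (0:ℝ), (τ*s)^(-(ℓ/2)) * Real.exp (-r^2/(c*(τ*s))) * g s)
          ≤ K * (τ^α / r^(ℓ + 2*α))) := by
  set m : ℝ := ℓ/2 + 1 + α with hm
  set n : ℕ := ⌈m⌉₊ with hn
  have hmn : m ≤ (n:ℝ) := Nat.le_ceil m
  have hm0 : 0 < m := by positivity
  set M : ℝ := ∫ s in Ioi (0:ℝ), s^(-(ℓ/2)) * g s with hM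
  have hM0 : 0 ≤ M := by
    apply setIntegral_nonneg measurableSet_Ioi
    intro s hs
    exact mul_nonneg (Real.rpow_nonneg (le_of_lt hs) _) (hgnn s hs)
  set D : ℝ := (n.factorial : ℝ) * chat * c^m / c with hD
  have hD0 : 0 < D := by positivity
  set E : ℝ := chat * c^(ℓ/2 + α) / (ℓ/2 + α) with hE
  have hE0 : 0 < E := by positivity
  refine ⟨M + D + E + 1, by positivity, fun τ r hτ hr => ?_⟩
  set F : ℝ → ℝ := fun s => (τ*s)^(-(ℓ/2)) * Real.exp (-r^2/(c*(τ*s))) * g s with hF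
  -- pointwise facts
  have hFnn : ∀ s ∈ Ioi (0:ℝ), 0 ≤ F s := by
    intro s hs
    have hs0 : (0:ℝ) < s := hs
    exact mul_nonneg (mul_nonneg (Real.rpow_nonneg (by positivity) _) (Real.exp_pos _).le)
      (hgnn s hs0)
  have hFle : ∀ s ∈ Ioi (0:ℝ), F s ≤ τ^(-(ℓ/2)) * (s^(-(ℓ/2)) * g s) := by
    intro s hs
    have hs0 : (0:ℝ) < s := hs
    have he : Real.exp (-r^2/(c*(τ*s))) ≤ 1 := by
      apply Real.exp_le_one_iff.mpr
      have : (0:ℝ) ≤ r^2/(c*(τ*s)) := by positivity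
      rw [neg_div]; linarith
    have hsp : (τ*s)^(-(ℓ/2)) = τ^(-(ℓ/2)) * s^(-(ℓ/2)) := Real.mul_rpow hτ.le hs0.le
    have h1 : F s ≤ (τ*s)^(-(ℓ/2)) * 1 * g s := by
      apply mul_le_mul_of_nonneg_right _ (hgnn s hs0)
      exact mul_le_mul_of_nonneg_left he (Real.rpow_nonneg (by positivity) _)
    calc F s ≤ (τ*s)^(-(ℓ/2)) * 1 * g s := h1
      _ = τ^(-(ℓ/2)) * (s^(-(ℓ/2)) * g s) := by rw [hsp]; ring
  have hGint : IntegrableOn (fun s : ℝ => τ^(-(ℓ/2)) * (s^(-(ℓ/2)) * g s)) (Ioi (0:ℝ)) :=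
    (aux_rpow_g_integrable hgm hgnn hgint hgl (by positivity)).const_mul _
  have hFmeas : AEStronglyMeasurable F ((volume : Measure ℝ).restrict (Ioi 0)) := by
    apply Measurable.aestronglyMeasurable
    fun_prop
  have hFint : IntegrableOn F (Ioi (0:ℝ)) := by
    apply Integrable.mono hGint hFmeas
    filter_upwards [ae_restrict_mem measurableSet_Ioi] with s hs
    have hs0 : (0:ℝ) < s := hs
    rw [Real.norm_eq_abs, Real.norm_eq_abs, abs_of_nonneg (hFnn s hs),
      abs_of_nonneg (mul_nonneg (Real.rpow_nonneg hτ.le _)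
        (mul_nonneg (Real.rpow_nonneg hs0.le _) (hgnn s hs0)))]
    exact hFle s hs
  refine ⟨hFint, ?_, ?_⟩
  · -- on-diagonal
    calc (∫ s in Ioi (0:ℝ), F s) ≤ ∫ s in Ioi (0:ℝ), τ^(-(ℓ/2)) * (s^(-(ℓ/2)) * g s) :=
          setIntegral_mono_on hFint hGint measurableSet_Ioi hFle
      _ = τ^(-(ℓ/2)) * M := by rw [integral_const_mul]
      _ ≤ (M + D + E + 1) * τ^(-(ℓ/2)) := by
          have := Real.rpow_nonneg hτ.le (-(ℓ/2))
          nlinarith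
  · -- off-diagonal
    intro hr'
    set S : ℝ := r^2/(c*τ) with hS
    have hS0 : 0 < S := by positivity
    have hsplit : Ioc (0:ℝ) S ∪ Ioi S = Ioi 0 := Ioc_union_Ioi_eq_Ioi hS0.le
    have hF1 : IntegrableOn F (Ioc (0:ℝ) S) := hFint.mono_set (by rw [← hsplit]; exact subset_union_left)
    have hF2 : IntegrableOn F (Ioi S) := hFint.mono_set (by rw [← hsplit]; exact subset_union_right)
    have hsum : (∫ s in Ioi (0:ℝ), F s) = (∫ s in Ioc (0:ℝ) S, F s) + (∫ s in Ioi S, F s) := by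
      rw [← hsplit, setIntegral_union Ioc_disjoint_Ioi_same measurableSet_Ioi hF1 hF2]
    -- piece 1
    set B1 : ℝ := (n.factorial : ℝ) * chat * c^m * τ^(1+α) / (r^2)^m with hB1
    have hpt1 : ∀ s ∈ Ioc (0:ℝ) S, F s ≤ B1 := by
      intro s hs
      obtain ⟨hs0, hsS⟩ := hs
      have h1 : (0:ℝ) < τ*s := by positivity
      have h2 : (0:ℝ) < r^2 := by positivity
      have h3 : (0:ℝ) < c*(τ*s) := by positivity
      set z : ℝ := r^2/(c*(τ*s)) with hz
      have hz1 : 1 ≤ z := by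
        rw [hz, le_div_iff₀ h3, one_mul]
        calc c*(τ*s) = (c*τ)*s := by ring
          _ ≤ (c*τ)*S := by
              apply mul_le_mul_of_nonneg_left hsS (by positivity)
          _ = r^2 := by rw [hS]; field_simp
      have hexp : Real.exp (-r^2/(c*(τ*s))) ≤ (n.factorial : ℝ) * z ^ (-m) := by
        rw [neg_div]
        exact aux_exp_neg_le n hz1 hmn
      have hgs : g s ≤ chat * s^(-(1+α)) := by
        have := hgb s hs0
        rwa [show (-1-α : ℝ) = -(1+α) by ring] at this
      have step1 : F s ≤ (τ*s)^(-(ℓ/2)) * ((n.factorial : ℝ) * z ^ (-m)) * (chat * s^(-(1+α))) := by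
        apply mul_le_mul
        · exact mul_le_mul_of_nonneg_left hexp (Real.rpow_nonneg h1.le _)
        · exact hgs
        · exact hgnn s hs0
        · positivity
      have step2 : (τ*s)^(-(ℓ/2)) * ((n.factorial : ℝ) * z ^ (-m)) * (chat * s^(-(1+α))) = B1 := by
        have h4 : (0:ℝ) ≤ r^2/(c*(τ*s)) := by positivity
        rw [hz, Real.rpow_neg h4, ← Real.inv_rpow h4, inv_div,
          Real.div_rpow (by positivity) h2.le, Real.mul_rpow hc.le h1.le,
          Real.mul_rpow hτ.le hs0.le, Real.mul_rpow hτ.le hs0.le]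
        have eτ : τ^(-(ℓ/2)) * τ^m = τ^(1+α) := by
          rw [← Real.rpow_add hτ]; congr 1; rw [hm]; ring
        have es : s^(-(ℓ/2)) * (s^m * s^(-(1+α))) = 1 := by
          rw [← Real.rpow_add hs0, ← Real.rpow_add hs0,
            show -(ℓ/2) + (m + -(1+α)) = 0 by rw [hm]; ring, Real.rpow_zero]
        calc τ^(-(ℓ/2)) * s^(-(ℓ/2)) * ((n.factorial:ℝ) * (c^m * (τ^m * s^m) / (r^2)^m)) * (chat * s^(-(1+α)))
            = (n.factorial:ℝ) * chat * c^m * (τ^(-(ℓ/2)) * τ^m) * (s^(-(ℓ/2)) * (s^m * s^(-(1+α)))) / (r^2)^m := by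
              ring
          _ = B1 := by rw [eτ, es, hB1]; ring
      calc F s ≤ (τ*s)^(-(ℓ/2)) * ((n.factorial : ℝ) * z ^ (-m)) * (chat * s^(-(1+α))) := step1
        _ = B1 := step2
    have hp1 : (∫ s in Ioc (0:ℝ) S, F s) ≤ B1 * S := by
      calc (∫ s in Ioc (0:ℝ) S, F s) ≤ ∫ _ in Ioc (0:ℝ) S, B1 :=
            setIntegral_mono_on hF1 (integrableOn_const (by
              rw [Real.volume_Ioc]; exact ENNReal.ofReal_ne_top)) measurableSet_Ioc hpt1
        _ = (volume (Ioc (0:ℝ) S)).toReal * B1 := by rw [setIntegral_const, smul_eq_mul, measureReal_def]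
        _ = B1 * S := by rw [Real.volume_Ioc, ENNReal.toReal_ofReal (by linarith)]; ring
    have hB1S : B1 * S = D * (τ^α / r^(ℓ + 2*α)) := by
      have h2 : (0:ℝ) < r^2 := by positivity
      have er2 : (r^2 : ℝ) = r ^ (2:ℝ) := by
        rw [show ((2:ℝ)) = ((2:ℕ):ℝ) by norm_num, Real.rpow_natCast]
      have erm : ((r^2 : ℝ))^m = r ^ ((2:ℝ)*m) := by
        rw [er2, ← Real.rpow_mul hr]
      have ersplit : r ^ ((2:ℝ)*m) = r ^ (2:ℝ) * r ^ (ℓ + 2*α) := by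
        rw [← Real.rpow_add hr']; congr 1; rw [hm]; ring
      have eτ2 : τ^(1+α) = τ * τ^α := by
        rw [Real.rpow_add hτ, Real.rpow_one]
      rw [hB1, hS, hD, erm, ersplit, eτ2]
      have hrl : (0:ℝ) < r ^ (ℓ + 2*α) := Real.rpow_pos_of_pos hr' _
      have hr2 : (0:ℝ) < r ^ (2:ℝ) := Real.rpow_pos_of_pos hr' _
      rw [er2]
      field_simp
    -- piece 2
    set φ : ℝ → ℝ := fun s => chat * τ^(-(ℓ/2)) * s^(-(ℓ/2+1+α)) with hφ
    have hφint : IntegrableOn φ (Ioi S) := by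
      apply Integrable.const_mul
      exact integrableOn_Ioi_rpow_of_lt (by linarith) hS0
    have hpt2 : ∀ s ∈ Ioi S, F s ≤ φ s := by
      intro s hs
      have hs0 : (0:ℝ) < s := lt_trans hS0 hs
      have hle := hFle s hs0
      have hgs : g s ≤ chat * s^(-(1+α)) := by
        have := hgb s hs0
        rwa [show (-1-α : ℝ) = -(1+α) by ring] at this
      have hcomb : s^(-(ℓ/2)) * (chat * s^(-(1+α))) = chat * s^(-(ℓ/2+1+α)) := by
        rw [show s^(-(ℓ/2)) * (chat * s^(-(1+α))) = chat * (s^(-(ℓ/2)) * s^(-(1+α))) by ring,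
          ← Real.rpow_add hs0]
        congr 2
        ring
      calc F s ≤ τ^(-(ℓ/2)) * (s^(-(ℓ/2)) * g s) := hle
        _ ≤ τ^(-(ℓ/2)) * (s^(-(ℓ/2)) * (chat * s^(-(1+α)))) := by
            apply mul_le_mul_of_nonneg_left _ (Real.rpow_nonneg hτ.le _)
            exact mul_le_mul_of_nonneg_left hgs (Real.rpow_nonneg hs0.le _)
        _ = φ s := by rw [hφ]; simp only []; rw [hcomb]; ring
    have hp2 : (∫ s in Ioi S, F s) ≤ E * (τ^α / r^(ℓ + 2*α)) := by
      have hval : (∫ s in Ioi S, s^(-(ℓ/2+1+α))) = -S ^ (-(ℓ/2+1+α) + 1) / (-(ℓ/2+1+α) + 1) :=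
        integral_Ioi_rpow_of_lt (by linarith) hS0
      have step : (∫ s in Ioi S, F s) ≤ ∫ s in Ioi S, φ s :=
        setIntegral_mono_on hF2 hφint measurableSet_Ioi hpt2
      have hφval : (∫ s in Ioi S, φ s) = chat * τ^(-(ℓ/2)) * (S ^ (-(ℓ/2+α)) / (ℓ/2+α)) := by
        rw [hφ]
        rw [MeasureTheory.integral_const_mul]
        rw [hval, show -(ℓ/2+1+α) + 1 = -(ℓ/2+α) by ring, neg_div_neg_eq]
      have hSval : S ^ (-(ℓ/2+α)) = c^(ℓ/2+α) * τ^(ℓ/2+α) / r^(ℓ+2*α) := by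
        have h4 : (0:ℝ) ≤ r^2/(c*τ) := by positivity
        rw [hS, Real.rpow_neg h4, ← Real.inv_rpow h4, inv_div,
          Real.div_rpow (by positivity) (by positivity), Real.mul_rpow hc.le hτ.le]
        congr 1
        rw [show (r^2 : ℝ) = r ^ (2:ℝ) by
          rw [show ((2:ℝ)) = ((2:ℕ):ℝ) by norm_num, Real.rpow_natCast],
          ← Real.rpow_mul hr]
        congr 1
        ring
      have eτ3 : τ^(-(ℓ/2)) * τ^(ℓ/2+α) = τ^α := by
        rw [← Real.rpow_add hτ]; congr 1; ring
      calc (∫ s in Ioi S, F s) ≤ ∫ s in Ioi S, φ s := step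
        _ = chat * τ^(-(ℓ/2)) * (S ^ (-(ℓ/2+α)) / (ℓ/2+α)) := hφval
        _ = E * (τ^α / r^(ℓ + 2*α)) := by
            rw [hSval, hE, ← eτ3]
            have hrl : (0:ℝ) < r ^ (ℓ + 2*α) := Real.rpow_pos_of_pos hr' _
            field_simp
    have hpos : (0:ℝ) ≤ τ^α / r^(ℓ + 2*α) := by positivity
    calc (∫ s in Ioi (0:ℝ), F s) = (∫ s in Ioc (0:ℝ) S, F s) + (∫ s in Ioi S, F s) := hsum
      _ ≤ B1 * S + E * (τ^α / r^(ℓ + 2*α)) := add_le_add hp1 hp2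
      _ = D * (τ^α / r^(ℓ + 2*α)) + E * (τ^α / r^(ℓ + 2*α)) := by rw [hB1S]
      _ ≤ (M + D + E + 1) * (τ^α / r^(ℓ + 2*α)) := by nlinarith


end

/-- Stability of subordinated kernels: the weighted Gaussian bound on `|p − p̃|` implies
`|q − q̃| ≤ C ε [min(t^{-d/(2α)}, t/|x-y|^{d+2α}) + min(t^{-(d+2γ)/(2α)}, t/|x-y|^{d+2γ+2α})]`. -/
theorem subordinated_kernel_stability {d : ℕ}
    (α γ c c' ε chat : ℝ) (hα : α ∈ Ioo (0 : ℝ) 1) (hγ : γ ∈ Ioo (0 : ℝ) 1)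
    (hc : 0 < c) (hc' : 0 < c') (hε : 0 ≤ ε) (hchat : 0 < chat)
    (g : ℝ → ℝ) (hgm : Measurable g) (hgnn : ∀ s : ℝ, 0 < s → 0 ≤ g s)
    (hgint : (∫ s in Ioi (0 : ℝ), g s) = 1)
    (hgb : ∀ s : ℝ, 0 < s → g s ≤ chat * s ^ (-1 - α))
    (hgl : ∀ m : ℝ, 0 ≤ m → IntegrableOn (fun s : ℝ => s ^ (-m) * g s) (Ioc 0 1))
    (p pt : ℝ → EuclideanSpace ℝ (Fin d) → EuclideanSpace ℝ (Fin d) → ℝ)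
    (hpm : ∀ x y, AEStronglyMeasurable (fun s : ℝ => p s x y) (volume.restrict (Ioi 0)))
    (hptm : ∀ x y, AEStronglyMeasurable (fun s : ℝ => pt s x y) (volume.restrict (Ioi 0)))
    (hpi : ∀ t : ℝ, 0 < t → ∀ x y : EuclideanSpace ℝ (Fin d),
      IntegrableOn (fun s : ℝ => p (t ^ (1 / α) * s) x y * g s) (Ioi 0) ∧
      IntegrableOn (fun s : ℝ => pt (t ^ (1 / α) * s) x y * g s) (Ioi 0))
    (hstab : ∀ t : ℝ, 0 < t → ∀ x y : EuclideanSpace ℝ (Fin d),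
      |p t x y - pt t x y|
        ≤ c' * t ^ (-(d : ℝ) / 2) * Real.exp (-(dist x y) ^ 2 / (c * t)) *
            (t ^ (-γ) + 1) * ε) :
    ∃ C : ℝ, 0 < C ∧ ∀ t : ℝ, 0 < t → ∀ x y : EuclideanSpace ℝ (Fin d),
      |(∫ s in Ioi (0 : ℝ), p (t ^ (1 / α) * s) x y * g s) -
          (∫ s in Ioi (0 : ℝ), pt (t ^ (1 / α) * s) x y * g s)|
        ≤ C * ε * (t ^ (-(d : ℝ) / (2 * α)) + t ^ (-((d : ℝ) + 2 * γ) / (2 * α))) ∧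
      (x ≠ y →
        |(∫ s in Ioi (0 : ℝ), p (t ^ (1 / α) * s) x y * g s) -
            (∫ s in Ioi (0 : ℝ), pt (t ^ (1 / α) * s) x y * g s)|
          ≤ C * ε *
              (min (t ^ (-(d : ℝ) / (2 * α))) (t / dist x y ^ ((d : ℝ) + 2 * α)) +
                min (t ^ (-((d : ℝ) + 2 * γ) / (2 * α)))
                  (t / dist x y ^ ((d : ℝ) + 2 * γ + 2 * α)))) := by
  obtain ⟨hα0, hα1⟩ := hα
  obtain ⟨hγ0, hγ1⟩ := hγ
  obtain ⟨K₁, hK₁, hbd₁⟩ := aux_key (ℓ := (d:ℝ)) (c := c) hα0 (by positivity) hc hchat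
    hgm hgnn hgint hgb hgl
  obtain ⟨K₂, hK₂, hbd₂⟩ := aux_key (ℓ := (d:ℝ) + 2*γ) (c := c) hα0 (by positivity) hc hchat
    hgm hgnn hgint hgb hgl
  refine ⟨c' * (K₁ + K₂), by positivity, fun t ht x y => ?_⟩
  set τ : ℝ := t ^ (1/α) with hτdef
  have hτ : 0 < τ := Real.rpow_pos_of_pos ht _
  have hr : (0:ℝ) ≤ dist x y := dist_nonneg
  obtain ⟨hint₁, hdiag₁, hoff₁⟩ := hbd₁ τ (dist x y) hτ hr
  obtain ⟨hint₂, hdiag₂, hoff₂⟩ := hbd₂ τ (dist x y) hτ hr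
  set F₁ : ℝ → ℝ := fun s => (τ*s)^(-((d:ℝ)/2)) * Real.exp (-(dist x y)^2/(c*(τ*s))) * g s
    with hF₁
  set F₂ : ℝ → ℝ :=
    fun s => (τ*s)^(-(((d:ℝ) + 2*γ)/2)) * Real.exp (-(dist x y)^2/(c*(τ*s))) * g s with hF₂
  -- exponent conversions
  have eA : τ^(-((d:ℝ)/2)) = t ^ (-(d : ℝ) / (2 * α)) := by
    rw [hτdef, ← Real.rpow_mul ht.le]
    congr 1
    field_simp
  have eB : τ^(-(((d:ℝ) + 2*γ)/2)) = t ^ (-((d : ℝ) + 2 * γ) / (2 * α)) := by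
    rw [hτdef, ← Real.rpow_mul ht.le]
    congr 1
    field_simp
  have eT : τ^α = t := by
    rw [hτdef, ← Real.rpow_mul ht.le, one_div, inv_mul_cancel₀ (ne_of_gt hα0), Real.rpow_one]
  -- the difference as a single integral
  have hsub : IntegrableOn
      (fun s : ℝ => p (τ * s) x y * g s - pt (τ * s) x y * g s) (Ioi (0:ℝ)) :=
    (hpi t ht x y).1.sub (hpi t ht x y).2
  have hkey : |(∫ s in Ioi (0 : ℝ), p (τ * s) x y * g s) -
      (∫ s in Ioi (0 : ℝ), pt (τ * s) x y * g s)|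
      ≤ c' * ε * ((∫ s in Ioi (0:ℝ), F₂ s) + (∫ s in Ioi (0:ℝ), F₁ s)) := by
    rw [← integral_sub (hpi t ht x y).1 (hpi t ht x y).2]
    have hptw : ∀ s ∈ Ioi (0:ℝ),
        |p (τ * s) x y * g s - pt (τ * s) x y * g s| ≤ c' * ε * (F₂ s + F₁ s) := by
      intro s hs
      have hs0 : (0:ℝ) < s := hs
      have hu : (0:ℝ) < τ * s := by positivity
      have h0 := hstab (τ*s) hu x y
      have hgs := hgnn s hs0
      have e1 : (τ*s)^(-(d:ℝ)/2) * (τ*s)^(-γ) = (τ*s)^(-(((d:ℝ) + 2*γ)/2)) := by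
        rw [← Real.rpow_add hu]; congr 1; ring
      have e2 : (τ*s)^(-(d:ℝ)/2) = (τ*s)^(-((d:ℝ)/2)) := by congr 1; ring
      calc |p (τ * s) x y * g s - pt (τ * s) x y * g s|
          = |p (τ*s) x y - pt (τ*s) x y| * g s := by
            rw [← sub_mul, abs_mul, abs_of_nonneg hgs]
        _ ≤ (c' * (τ*s) ^ (-(d : ℝ) / 2) * Real.exp (-(dist x y) ^ 2 / (c * (τ*s))) *
              ((τ*s) ^ (-γ) + 1) * ε) * g s := mul_le_mul_of_nonneg_right h0 hgs
        _ = c' * ε * (F₂ s + F₁ s) := by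
            rw [hF₁, hF₂]
            simp only []
            rw [← e1, ← e2]
            ring
    calc |∫ s in Ioi (0:ℝ), (p (τ * s) x y * g s - pt (τ * s) x y * g s)|
        ≤ ∫ s in Ioi (0:ℝ), |p (τ * s) x y * g s - pt (τ * s) x y * g s| := by
          simpa [Real.norm_eq_abs] using
            norm_integral_le_integral_norm (μ := volume.restrict (Ioi (0:ℝ)))
              (fun s : ℝ => p (τ * s) x y * g s - pt (τ * s) x y * g s)
      _ ≤ ∫ s in Ioi (0:ℝ), c' * ε * (F₂ s + F₁ s) :=
          setIntegral_mono_on hsub.abs ((hint₂.add hint₁).const_mul _)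
            measurableSet_Ioi hptw
      _ = c' * ε * ((∫ s in Ioi (0:ℝ), F₂ s) + (∫ s in Ioi (0:ℝ), F₁ s)) := by
          rw [integral_const_mul, integral_add hint₂ hint₁]
  constructor
  · -- on-diagonal
    refine hkey.trans ?_
    have h1 : (∫ s in Ioi (0:ℝ), F₁ s) ≤ K₁ * t ^ (-(d : ℝ) / (2 * α)) := by
      rw [← eA]; exact hdiag₁
    have h2 : (∫ s in Ioi (0:ℝ), F₂ s) ≤ K₂ * t ^ (-((d : ℝ) + 2 * γ) / (2 * α)) := by
      rw [← eB]; exact hdiag₂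
    have ha : (0:ℝ) ≤ t ^ (-(d : ℝ) / (2 * α)) := Real.rpow_nonneg ht.le _
    have hb : (0:ℝ) ≤ t ^ (-((d : ℝ) + 2 * γ) / (2 * α)) := Real.rpow_nonneg ht.le _
    have hint1 : (0:ℝ) ≤ ∫ s in Ioi (0:ℝ), F₁ s := by
      apply setIntegral_nonneg measurableSet_Ioi
      intro s hs
      have hs0 : (0:ℝ) < s := hs
      simp only [hF₁, hF₂]
      exact mul_nonneg (mul_nonneg (Real.rpow_nonneg (by positivity) _)
        (Real.exp_pos _).le) (hgnn s hs0)
    have hint2 : (0:ℝ) ≤ ∫ s in Ioi (0:ℝ), F₂ s := by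
      apply setIntegral_nonneg measurableSet_Ioi
      intro s hs
      have hs0 : (0:ℝ) < s := hs
      simp only [hF₁, hF₂]
      exact mul_nonneg (mul_nonneg (Real.rpow_nonneg (by positivity) _)
        (Real.exp_pos _).le) (hgnn s hs0)
    nlinarith [mul_le_mul_of_nonneg_left (add_le_add h2 h1) (mul_nonneg hc'.le hε),
      mul_nonneg (mul_nonneg (mul_nonneg hc'.le hε) hK₁.le) hb,
      mul_nonneg (mul_nonneg (mul_nonneg hc'.le hε) hK₂.le) ha]
  · -- off-diagonal
    intro hxy
    have hr' : (0:ℝ) < dist x y := dist_pos.mpr hxy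
    refine hkey.trans ?_
    have h1 : (∫ s in Ioi (0:ℝ), F₁ s)
        ≤ K₁ * min (t ^ (-(d : ℝ) / (2 * α))) (t / dist x y ^ ((d : ℝ) + 2 * α)) := by
      rcases le_total (t ^ (-(d : ℝ) / (2 * α))) (t / dist x y ^ ((d : ℝ) + 2 * α)) with h | h
      · rw [min_eq_left h, ← eA]; exact hdiag₁
      · rw [min_eq_right h]
        have := hoff₁ hr'
        rwa [eT] at this
    have h2 : (∫ s in Ioi (0:ℝ), F₂ s)
        ≤ K₂ * min (t ^ (-((d : ℝ) + 2 * γ) / (2 * α)))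
            (t / dist x y ^ ((d : ℝ) + 2 * γ + 2 * α)) := by
      rcases le_total (t ^ (-((d : ℝ) + 2 * γ) / (2 * α)))
          (t / dist x y ^ ((d : ℝ) + 2 * γ + 2 * α)) with h | h
      · rw [min_eq_left h, ← eB]; exact hdiag₂
      · rw [min_eq_right h]
        have := hoff₂ hr'
        rwa [eT] at this
    have ha : (0:ℝ) ≤ min (t ^ (-(d : ℝ) / (2 * α))) (t / dist x y ^ ((d : ℝ) + 2 * α)) :=
      le_min (Real.rpow_nonneg ht.le _) (by positivity)
    have hb : (0:ℝ) ≤ min (t ^ (-((d : ℝ) + 2 * γ) / (2 * α)))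
        (t / dist x y ^ ((d : ℝ) + 2 * γ + 2 * α)) :=
      le_min (Real.rpow_nonneg ht.le _) (by positivity)
    have hint1 : (0:ℝ) ≤ ∫ s in Ioi (0:ℝ), F₁ s := by
      apply setIntegral_nonneg measurableSet_Ioi
      intro s hs
      have hs0 : (0:ℝ) < s := hs
      simp only [hF₁, hF₂]
      exact mul_nonneg (mul_nonneg (Real.rpow_nonneg (by positivity) _)
        (Real.exp_pos _).le) (hgnn s hs0)
    have hint2 : (0:ℝ) ≤ ∫ s in Ioi (0:ℝ), F₂ s := by
      apply setIntegral_nonneg measurableSet_Ioi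
      intro s hs
      have hs0 : (0:ℝ) < s := hs
      simp only [hF₁, hF₂]
      exact mul_nonneg (mul_nonneg (Real.rpow_nonneg (by positivity) _)
        (Real.exp_pos _).le) (hgnn s hs0)
    nlinarith [mul_le_mul_of_nonneg_left (add_le_add h2 h1) (mul_nonneg hc'.le hε),
      mul_nonneg (mul_nonneg (mul_nonneg hc'.le hε) hK₁.le) hb,
      mul_nonneg (mul_nonneg (mul_nonneg hc'.le hε) hK₂.le) ha]
end
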